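/- Let g₁, g₂ : [0,b] → [0,1] and for s ∈ [0,b] define M(s) = max( sup_{t ∈ [a,s]} min(g₂(t), inf_{t'∈[0,t]} g₁(t')), inf_{t'∈[0,s]} g₁(t') ) (with sup over empty set taken as 0). Then M is monotonically non-increasing in s. -/

import Mathlib

theorem until_monitor_upper_antitone (a b : ℝ) (hab : a ≤ b)
    (g₁ g₂ : ℝ → ℝ)
    (hg₁ : ∀ t, g₁ t ∈ Set.Icc (0:ℝ) 1) (hg₂ : ∀ t, g₂ t ∈ Set.Icc (0:ℝ) 1)
    (s₁ s₂ : ℝ) (hs₁ : s₁ ∈ Set.Icc 0 b) (hs₂ : s₂ ∈ Set.Icc 0 b) (h12 : s₁ ≤ s₂) :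
    max (sSup ((fun t => min (g₂ t) (sInf (g₁ '' Set.Icc 0 t))) '' Set.Icc a s₂))
        (sInf (g₁ '' Set.Icc 0 s₂))
      ≤ max (sSup ((fun t => min (g₂ t) (sInf (g₁ '' Set.Icc 0 t))) '' Set.Icc a s₁))
        (sInf (g₁ '' Set.Icc 0 s₁)) := by
  set f : ℝ → ℝ := fun t => min (g₂ t) (sInf (g₁ '' Set.Icc 0 t)) with hf
  have hbdd : ∀ t : ℝ, BddBelow (g₁ '' Set.Icc 0 t) := by
    intro t
    exact ⟨0, fun x ⟨y, _, hy⟩ => hy ▸ (hg₁ y).1⟩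
  have hinf_nonneg : ∀ t : ℝ, 0 ≤ t → 0 ≤ sInf (g₁ '' Set.Icc 0 t) := by
    intro t ht
    exact le_csInf ⟨g₁ 0, Set.mem_image_of_mem _ ⟨le_refl 0, ht⟩⟩
      (fun x ⟨y, _, hy⟩ => hy ▸ (hg₁ y).1)
  have hinf_mono : ∀ t : ℝ, s₁ ≤ t → sInf (g₁ '' Set.Icc 0 t) ≤ sInf (g₁ '' Set.Icc 0 s₁) := by
    intro t ht
    exact csInf_le_csInf (hbdd t)
      ⟨g₁ 0, Set.mem_image_of_mem _ ⟨le_refl 0, hs₁.1⟩⟩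
      (Set.image_mono (Set.Icc_subset_Icc_right ht))
  have hinf1_nonneg : 0 ≤ sInf (g₁ '' Set.Icc 0 s₁) := hinf_nonneg s₁ hs₁.1
  have hBA : BddAbove (f '' Set.Icc a s₁) := by
    refine ⟨1, fun x ⟨y, _, hy⟩ => ?_⟩
    rw [← hy]
    exact le_trans (min_le_left _ _) (hg₂ y).2
  have hRHS : 0 ≤ max (sSup (f '' Set.Icc a s₁)) (sInf (g₁ '' Set.Icc 0 s₁)) :=
    le_max_of_le_right hinf1_nonneg
  apply max_le
  · apply Real.sSup_le _ hRHS
    rintro x ⟨t, ⟨hat, hts₂⟩, rfl⟩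
    rcases le_or_gt t s₁ with h | h
    · exact le_max_of_le_left (le_csSup hBA (Set.mem_image_of_mem _ ⟨hat, h⟩))
    · exact le_max_of_le_right (le_trans (min_le_right _ _) (hinf_mono t h.le))
  · exact le_max_of_le_right (hinf_mono s₂ h12)
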